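/- arXiv:1503.07991 — 4 statements merged into one kernel-verified Lean document; each statement's English description precedes it below -/
import Mathlib

section
/- Let n particles initially occupy a connected set of nodes of the triangular grid whose diameter is at most 2√n + 2, and suppose the final configuration is a straight line of n contracted particles (diameter n - 1). Then under any bijection between initial and final positions, the total sum over particles of the grid distance between initial and final position is Ω(n^2). In particular, any algorithm solving line formation from such an initial configuration performs Ω(n^2) movements in the worst case. -/
/-- The infinite equilateral triangular grid graph on `ℤ × ℤ`. -/
def Geqt : SimpleGraph (ℤ × ℤ) :=
  SimpleGraph.fromRel (fun v w => w - v ∈ ({(1, 0), (0, 1), (1, 1)} : Set (ℤ × ℤ)))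

/-- The six lattice directions along which a straight line in the triangular grid can run. -/
def lineDirs : Set (ℤ × ℤ) :=
  {(1, 0), (0, 1), (1, 1), (-1, 0), (0, -1), (-1, -1)}

lemma geqt_adj_of (v w : ℤ × ℤ) (h : w - v ∈ ({(1, 0), (0, 1), (1, 1)} : Set (ℤ × ℤ))) :
    Geqt.Adj v w := by
  rw [Geqt, SimpleGraph.fromRel_adj]
  refine ⟨?_, Or.inl h⟩
  rintro rfl
  simp only [Set.mem_insert_iff, Set.mem_singleton_iff, Prod.ext_iff, sub_self,
    Prod.fst_zero, Prod.snd_zero] at h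
  omega

lemma geqt_adj_coord {v w : ℤ × ℤ} (h : Geqt.Adj v w) :
    |v.1 - w.1| ≤ 1 ∧ |v.2 - w.2| ≤ 1 := by
  rw [Geqt, SimpleGraph.fromRel_adj] at h
  obtain ⟨-, h | h⟩ := h <;>
  · simp only [Set.mem_insert_iff, Set.mem_singleton_iff, Prod.ext_iff, Prod.fst_sub,
      Prod.snd_sub] at h
    constructor <;> rw [abs_le] <;> omega

lemma geqt_walk_coord {u v : ℤ × ℤ} (W : Geqt.Walk u v) :
    |u.1 - v.1| ≤ (W.length : ℤ) ∧ |u.2 - v.2| ≤ (W.length : ℤ) := by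
  induction W with
  | nil => simp
  | @cons a b c h W ih =>
    obtain ⟨h1, h2⟩ := geqt_adj_coord h
    simp only [SimpleGraph.Walk.length_cons]
    have t1 := abs_sub_le a.1 b.1 c.1
    have t2 := abs_sub_le a.2 b.2 c.2
    constructor
    · refine t1.trans ?_; push_cast; omega
    · refine t2.trans ?_; push_cast; omega

lemma geqt_reach_horiz (v : ℤ × ℤ) (k : ℤ) : Geqt.Reachable v (v + (k, 0)) := by
  induction k using Int.induction_on with
  | zero => convert SimpleGraph.Reachable.refl v using 1; ext <;> simp
  | succ k ih =>
    refine ih.trans (SimpleGraph.Adj.reachable (geqt_adj_of _ _ ?_))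
    left; ext <;> simp <;> ring
  | pred k ih =>
    refine ih.trans (SimpleGraph.Adj.reachable ?_)
    refine (geqt_adj_of _ _ ?_).symm
    left; ext <;> simp <;> ring

lemma geqt_reach_vert (v : ℤ × ℤ) (k : ℤ) : Geqt.Reachable v (v + (0, k)) := by
  induction k using Int.induction_on with
  | zero => convert SimpleGraph.Reachable.refl v using 1; ext <;> simp
  | succ k ih =>
    refine ih.trans (SimpleGraph.Adj.reachable (geqt_adj_of _ _ ?_))
    right; left; ext <;> simp <;> ring
  | pred k ih =>
    refine ih.trans (SimpleGraph.Adj.reachable ?_)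
    refine (geqt_adj_of _ _ ?_).symm
    right; left; ext <;> simp <;> ring

lemma geqt_reach (u v : ℤ × ℤ) : Geqt.Reachable u v := by
  have h1 := geqt_reach_horiz u (v.1 - u.1)
  have h2 := geqt_reach_vert (u + (v.1 - u.1, 0)) (v.2 - u.2)
  have : u + (v.1 - u.1, 0) + (0, v.2 - u.2) = v := by ext <;> simp
  rw [this] at h2
  exact h1.trans h2

lemma geqt_dist_coord (u v : ℤ × ℤ) :
    |u.1 - v.1| ≤ (Geqt.dist u v : ℤ) ∧ |u.2 - v.2| ≤ (Geqt.dist u v : ℤ) := by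
  obtain ⟨W, hW⟩ := (geqt_reach u v).exists_walk_length_eq_dist
  rw [← hW]
  exact geqt_walk_coord W

lemma sum_abs_lb (n : ℕ) (t : ℤ) :
    ((n / 4 : ℕ) : ℤ) * n ≤ 4 * ∑ i ∈ Finset.range n, |t + i| := by
  have hrefl : ∑ i ∈ Finset.range n, |t + ((n - 1 - i : ℕ) : ℤ)|
      = ∑ i ∈ Finset.range n, |t + (i : ℤ)| :=
    Finset.sum_range_reflect (fun i => |t + (i : ℤ)|) n
  have h1 : ∑ i ∈ Finset.range n, |(n : ℤ) - 1 - 2 * i|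
      ≤ 2 * ∑ i ∈ Finset.range n, |t + (i : ℤ)| := by
    calc ∑ i ∈ Finset.range n, |(n : ℤ) - 1 - 2 * i|
        ≤ ∑ i ∈ Finset.range n, (|t + (i : ℤ)| + |t + ((n - 1 - i : ℕ) : ℤ)|) := by
          refine Finset.sum_le_sum fun i hi => ?_
          have hi' : i < n := Finset.mem_range.mp hi
          have hc : ((n - 1 - i : ℕ) : ℤ) = (n : ℤ) - 1 - i := by omega
          have := abs_sub (t + ((n - 1 - i : ℕ) : ℤ)) (t + (i : ℤ))
          have heq : (t + ((n - 1 - i : ℕ) : ℤ)) - (t + (i : ℤ)) = (n : ℤ) - 1 - 2 * i := by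
            rw [hc]; ring
          rw [heq] at this
          linarith [this]
      _ = 2 * ∑ i ∈ Finset.range n, |t + (i : ℤ)| := by
          rw [Finset.sum_add_distrib, hrefl]; ring
  have h2 : ((n / 4 : ℕ) : ℤ) * n ≤ 2 * ∑ i ∈ Finset.range n, |(n : ℤ) - 1 - 2 * i| := by
    calc ((n / 4 : ℕ) : ℤ) * n = ∑ _i ∈ Finset.range (n / 4), (n : ℤ) := by
          simp [Finset.sum_const, mul_comm]
      _ ≤ ∑ i ∈ Finset.range (n / 4), 2 * |(n : ℤ) - 1 - 2 * i| := by
          refine Finset.sum_le_sum fun i hi => ?_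
          have hi' : i < n / 4 := Finset.mem_range.mp hi
          have : (n : ℤ) ≤ 2 * ((n : ℤ) - 1 - 2 * i) := by omega
          have habs : (n : ℤ) - 1 - 2 * i ≤ |(n : ℤ) - 1 - 2 * i| := le_abs_self _
          linarith
      _ = 2 * ∑ i ∈ Finset.range (n / 4), |(n : ℤ) - 1 - 2 * i| := by
          rw [Finset.mul_sum]
      _ ≤ 2 * ∑ i ∈ Finset.range n, |(n : ℤ) - 1 - 2 * i| := by
          have : Finset.range (n / 4) ⊆ Finset.range n :=
            Finset.range_subset_range.mpr (Nat.div_le_self n 4)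
          exact mul_le_mul_of_nonneg_left
            (Finset.sum_le_sum_of_subset_of_nonneg this fun i _ _ => abs_nonneg _) (by norm_num)
  linarith


/-- Lower bound for line formation: there is a constant `c > 0` such that for all large
enough `n`, if `n` particles initially occupy a connected set of nodes of the triangular grid
of diameter at most `2√n + 2`, and finally occupy a straight line of `n` nodes, then under
any bijection between initial and final positions the total grid distance travelled is at
least `c * n²`; in particular any line formation algorithm performs `Ω(n²)` movements. -/
theorem line_formation_lower_bound :
    ∃ c : ℝ, 0 < c ∧ ∃ N : ℕ, ∀ n, N ≤ n →
      ∀ (init fin : Fin n → ℤ × ℤ),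
        Function.Injective init → Function.Injective fin →
        (Geqt.induce (Set.range init)).Connected →
        (∀ i j, Geqt.dist (init i) (init j) ≤ 2 * Nat.sqrt n + 2) →
        (∃ p d, d ∈ lineDirs ∧ ∀ i : Fin n, fin i = p + ((i : ℕ) : ℤ) • d) →
        c * (n : ℝ) ^ 2 ≤ ∑ i, (Geqt.dist (init i) (fin i) : ℝ) := by
  refine ⟨1/32, by norm_num, 10000, ?_⟩
  intro n hn init fin hinj1 hinj2 hconn hdiam hline
  obtain ⟨p, d, hd, hfin⟩ := hline
  -- choose a coordinate functional
  obtain ⟨f, hflip, hfd, hflin⟩ :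
      ∃ f : ℤ × ℤ → ℤ, (∀ u v : ℤ × ℤ, |f u - f v| ≤ (Geqt.dist u v : ℤ)) ∧
        (f d = 1 ∨ f d = -1) ∧ (∀ (q : ℤ × ℤ) (k : ℤ), f (q + k • d) = f q + k * f d) := by
    have hfst : ∀ u v : ℤ × ℤ, |u.1 - v.1| ≤ (Geqt.dist u v : ℤ) :=
      fun u v => (geqt_dist_coord u v).1
    have hsnd : ∀ u v : ℤ × ℤ, |u.2 - v.2| ≤ (Geqt.dist u v : ℤ) :=
      fun u v => (geqt_dist_coord u v).2
    simp only [lineDirs, Set.mem_insert_iff, Set.mem_singleton_iff] at hd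
    rcases hd with rfl | rfl | rfl | rfl | rfl | rfl
    · exact ⟨Prod.fst, hfst, by norm_num, fun q k => by simp⟩
    · exact ⟨Prod.snd, hsnd, by norm_num, fun q k => by simp⟩
    · exact ⟨Prod.fst, hfst, by norm_num, fun q k => by simp⟩
    · exact ⟨Prod.fst, hfst, by norm_num, fun q k => by simp⟩
    · exact ⟨Prod.snd, hsnd, by norm_num, fun q k => by simp⟩
    · exact ⟨Prod.fst, hfst, by norm_num, fun q k => by simp⟩
  have hn0 : 0 < n := by omega
  set s : ℕ := Nat.sqrt n with hs
  set i0 : Fin n := ⟨0, hn0⟩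
  set m : ℤ := f (init i0) with hm
  set ε : ℤ := f d with hε
  set t : ℤ := ε * (f p - m) with ht
  have hεsq : ε * ε = 1 := by rcases hfd with h | h <;> rw [← hε] at * <;> rw [h] <;> ring
  -- key pointwise identity
  have habs : ∀ i : Fin n, |f (fin i) - m| = |t + (i : ℤ)| := by
    intro i
    have h1 : f (fin i) = f p + (i : ℤ) * ε := by rw [hfin i, hflin]
    have h2 : f (fin i) - m = ε * (t + (i : ℤ)) := by
      rw [h1, ht]; rcases hfd with h | h <;> rw [← hε] at * <;> rw [h] <;> ring
    rw [h2, abs_mul]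
    rcases hfd with h | h <;> rw [← hε] at * <;> rw [h] <;> simp
  have hSb : ∀ i : Fin n, |f (init i) - m| ≤ (2 * s + 2 : ℤ) := by
    intro i
    refine (hflip _ _).trans ?_
    have := hdiam i i0
    exact_mod_cast Nat.cast_le.mpr this
  -- termwise lower bound on dist
  have hterm : ∀ i : Fin n, |t + (i : ℤ)| ≤ (Geqt.dist (init i) (fin i) : ℤ) + (2 * s + 2) := by
    intro i
    have h1 : |f (fin i) - m| ≤ |f (fin i) - f (init i)| + |f (init i) - m| := by
      have := abs_sub_le (f (fin i)) (f (init i)) m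
      linarith
    have h2 := hflip (fin i) (init i)
    have h3 : |f (fin i) - f (init i)| = |f (init i) - f (fin i)| := abs_sub_comm _ _
    have h4 : (Geqt.dist (fin i) (init i) : ℤ) = (Geqt.dist (init i) (fin i) : ℤ) := by
      rw [SimpleGraph.dist_comm]
    rw [← habs i]
    have := hSb i
    linarith [hflip (fin i) (init i), h4 ▸ hflip (fin i) (init i)]
  set D : ℤ := ∑ i : Fin n, (Geqt.dist (init i) (fin i) : ℤ) with hD
  have hsum : ∑ i ∈ Finset.range n, |t + (i : ℤ)| ≤ D + n * (2 * s + 2) := by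
    rw [← Fin.sum_univ_eq_sum_range (fun i => |t + (i : ℤ)|) n]
    calc ∑ i : Fin n, |t + (i : ℤ)|
        ≤ ∑ i : Fin n, ((Geqt.dist (init i) (fin i) : ℤ) + (2 * s + 2)) :=
          Finset.sum_le_sum fun i _ => hterm i
      _ = D + n * (2 * s + 2) := by
          rw [Finset.sum_add_distrib, hD, Finset.sum_const, Finset.card_univ, Fintype.card_fin]
          simp [nsmul_eq_mul]
  have hquarter := sum_abs_lb n t
  -- numeric facts
  have hss : (s : ℤ) * s ≤ n := by
    have h := Nat.sqrt_le' n
    have h2 : s * s ≤ n := by simpa [pow_two] using h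
    exact_mod_cast h2
  have hs100 : (100 : ℤ) ≤ s := by
    have : 100 ≤ Nat.sqrt n := Nat.le_sqrt'.mpr (by omega)
    exact_mod_cast this
  have hq4 : (n : ℤ) - 3 ≤ 4 * ((n / 4 : ℕ) : ℤ) := by omega
  -- pass to reals
  have hgoal : (n : ℝ) ^ 2 ≤ 32 * (D : ℝ) := by
    have hA : ((n / 4 : ℕ) : ℝ) * n ≤ 4 * ((D : ℝ) + n * (2 * s + 2)) := by
      have hZ : ((n / 4 : ℕ) : ℤ) * n ≤ 4 * (D + n * (2 * s + 2)) := by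
        calc ((n / 4 : ℕ) : ℤ) * n ≤ 4 * ∑ i ∈ Finset.range n, |t + (i : ℤ)| := hquarter
          _ ≤ 4 * (D + n * (2 * s + 2)) := by linarith
      have hR := (Int.cast_le (R := ℝ)).mpr hZ
      push_cast [Int.cast_natCast] at hR
      have hR2 := (Int.cast_le (R := ℝ)).mpr hZ
      simp only [Int.cast_mul, Int.cast_add, Int.cast_natCast, Int.cast_ofNat] at hR2
      exact hR2
    have hB : (n : ℝ) - 3 ≤ 4 * ((n / 4 : ℕ) : ℝ) := by
      have h : n ≤ 4 * (n / 4) + 3 := by omega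
      have h' : (n : ℝ) ≤ 4 * ((n / 4 : ℕ) : ℝ) + 3 := by exact_mod_cast h
      linarith
    have hss' : (s : ℝ) * s ≤ n := by exact_mod_cast hss
    have hs100' : (100 : ℝ) ≤ s := by exact_mod_cast hs100
    have hn0' : (0 : ℝ) ≤ n := by positivity
    have hkey : (64 : ℝ) * s + 76 ≤ n := by nlinarith
    nlinarith [mul_nonneg hn0' (sub_nonneg.mpr hkey), mul_le_mul_of_nonneg_right hB hn0']
  have hcast : ∑ i, (Geqt.dist (init i) (fin i) : ℝ) = (D : ℝ) := by
    rw [hD]; push_cast; ring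
  rw [hcast]
  linarith
end

section
/- In any reachable configuration of the spanning forest algorithm, if a maximal set of expanded particles forms a chain p_0, p_1, ..., p_k in a tree of the forest where each p_{i+1} is a child of p_i blocked from contracting, then the chain ends at a leaf of the forest, which can contract; hence by induction every expanded particle eventually contracts (Lemma 8). Abstractly: in a finite forest where every non-leaf 'blocked' node has a blocked child, every maximal descending chain of blocked nodes reaches a leaf, and leaves are never blocked; therefore the set of blocked nodes admits no infinite descending chain, so under fair scheduling every blocked node is eventually unblocked. -/
/-- Lemma 8 (abstract well-foundedness form): in a finite forest of particles given by a
parent-pointer map with no directed cycle, suppose every 'blocked' (expanded, unable to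
contract) particle has a blocked child; since a leaf has no children (and hence is never
blocked) and the forest is finite and acyclic, a descending chain of blocked nodes cannot
exist, so in fact no particle is blocked — hence every expanded particle can, and under fair
scheduling eventually does, contract. -/
theorem no_blocked_particles {V : Type*} [Fintype V] (parent : V → Option V)
    (hacyc : ¬ ∃ v, Relation.TransGen (fun a b => parent a = some b) v v)
    (blocked : V → Prop)
    (hdesc : ∀ v, blocked v → ∃ c, parent c = some v ∧ blocked c) :
    ∀ v, ¬ blocked v := by
  intro v hv
  choose c hc hcb using hdesc
  let f : ℕ → {x : V // blocked x} := fun n =>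
    Nat.rec ⟨v, hv⟩ (fun _ p => ⟨c p.1 p.2, hcb p.1 p.2⟩) n
  have hstep : ∀ n, parent (f (n + 1)).1 = some (f n).1 := fun n => hc _ _
  have hchain : ∀ m k, Relation.TransGen (fun a b => parent a = some b)
      (f (m + k + 1)).1 (f m).1 := by
    intro m k
    induction k with
    | zero => exact Relation.TransGen.single (hstep m)
    | succ k ih => exact Relation.TransGen.head (hstep (m + k + 1)) ih
  obtain ⟨x, y, hxy, hfeq⟩ := Finite.exists_ne_map_eq_of_infinite (fun n => (f n).1)
  rcases Nat.lt_or_ge x y with h | h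
  · obtain ⟨k, rfl⟩ := Nat.exists_eq_add_of_lt h
    exact hacyc ⟨(f x).1, hfeq ▸ hchain x k⟩
  · have h' : y < x := lt_of_le_of_ne h (Ne.symm hxy)
    obtain ⟨k, rfl⟩ := Nat.exists_eq_add_of_lt h'
    exact hacyc ⟨(f y).1, hfeq ▸ hchain y k⟩
end

section
/- For any candidate c with segment of maximal length l on the cycle, c covers every candidate c' with d(c', c) < l, and c itself is not covered by any candidate; moreover |seg(c)| ≥ |seg(pred(c))| fails to trigger withdrawal, i.e., the candidate with the (weakly) longest segment never withdraws its candidacy in subphase 1. Consequently (safety), at least one candidate always remains on the cycle corresponding to the outer boundary. -/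
/-- `n` candidates sit on a cycle in cyclic order, indexed by `ZMod n`; `s j` is the length
of the segment following candidate `j`. `cycDist n s j m` is the number of agents strictly
between candidate `j` and the candidate `m` positions further along the cycle direction
(the segments in between plus the `m - 1` intermediate candidates). -/
def cycDist (n : ℕ) (s : ZMod n → ℕ) (j : ZMod n) (m : ℕ) : ℕ :=
  (∑ t ∈ Finset.range m, s (j + (t : ZMod n))) + (m - 1)

/-- Lemma 1 (safety): let `i₀` be a candidate whose segment length is (weakly) maximal.
Then (1) `i₀` covers every candidate `c'` with `d(c', i₀) < s i₀` (by definition of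
covering); (2) `i₀` is not covered by any candidate, i.e. no candidate `i₀ + m` has
`d(i₀, i₀ + m) < s (i₀ + m)`; (3) the back segment of `i₀` is not longer than its front
segment. Consequently some candidate (one of maximal segment length) survives subphase 1:
it is not covered and its front segment is not shorter than its back segment. -/
theorem max_segment_candidate_survives (n : ℕ) [NeZero n] (s : ZMod n → ℕ)
    (i₀ : ZMod n) (hmax : ∀ j, s j ≤ s i₀) :
    (∀ (j : ZMod n) (m : ℕ), 1 ≤ m → m ≤ n → j + (m : ZMod n) = i₀ →
      cycDist n s j m < s i₀ → s i₀ > cycDist n s j m) ∧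
    (∀ m : ℕ, 1 ≤ m → m ≤ n → ¬ (cycDist n s i₀ m < s (i₀ + (m : ZMod n)))) ∧
    s (i₀ - 1) ≤ s i₀ ∧
    (∃ j : ZMod n,
      (∀ m : ℕ, 1 ≤ m → m ≤ n → ¬ (cycDist n s j m < s (j + (m : ZMod n)))) ∧
      ¬ (s j < s (j - 1))) := by
  have key : ∀ m : ℕ, 1 ≤ m → m ≤ n → ¬ (cycDist n s i₀ m < s (i₀ + (m : ZMod n))) := by
    intro m hm _ hlt
    have h0 : s i₀ ≤ ∑ t ∈ Finset.range m, s (i₀ + (t : ZMod n)) := by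
      have : (0 : ℕ) ∈ Finset.range m := Finset.mem_range.mpr hm
      calc s i₀ = s (i₀ + ((0:ℕ) : ZMod n)) := by simp
        _ ≤ ∑ t ∈ Finset.range m, s (i₀ + (t : ZMod n)) :=
          Finset.single_le_sum (f := fun t : ℕ => s (i₀ + (t : ZMod n))) (fun _ _ => Nat.zero_le _) this
    have : s (i₀ + (m : ZMod n)) ≤ cycDist n s i₀ m :=
      le_trans (hmax _) (le_trans h0 (Nat.le_add_right _ _))
    omega
  exact ⟨fun j m _ _ _ h => h, key, hmax _, ⟨i₀, key, not_lt.mpr (hmax _)⟩⟩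
end

section
/- In the geometric amoebot model, the successor/predecessor rule for agents on a boundary yields a well-defined set of disjoint cycles: for each agent a (a particle together with one of its adjacent empty regions), defining succ(a) by scanning the neighbors of a's node clockwise starting from the empty region and taking the first occupied node, and pred(a) by the analogous counter-clockwise scan, the functions succ and pred are mutually inverse bijections on the set of agents, so the agents decompose into disjoint cycles. -/
/-- The six unit directions of the triangular grid in clockwise cyclic order, indexed by
`ZMod 6`, so that the neighbors of a node `v` are `v + vec6 d` for `d : ZMod 6`. -/
def vec6 (d : ZMod 6) : ℤ × ℤ :=
  ![((1 : ℤ), (0 : ℤ)), (1, 1), (0, 1), (-1, 0), (-1, -1), (0, -1)] ⟨d.val, d.val_lt⟩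

/-- An agent of the particle structure `A`: a particle at node `v ∈ A` together with one of
the maximal arcs of empty nodes in its local neighborhood (i.e. one of the empty regions in
its local view), represented canonically by the clockwise-last empty direction `d` of the
arc: `v + vec6 d` is empty and `v + vec6 (d + 1)` is occupied. -/
def Agent (A : Set (ℤ × ℤ)) : Type :=
  {p : (ℤ × ℤ) × ZMod 6 // p.1 ∈ A ∧ p.1 + vec6 p.2 ∉ A ∧ p.1 + vec6 (p.2 + 1) ∈ A}

/-- `SuccRel A a b` holds iff `b` is the successor of agent `a`: scanning the neighbors of
`a`'s node clockwise starting from its empty region, the first occupied node is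
`w = v + vec6 (d + 1)`, and `b` is the agent of `w` for the arc of `w`'s neighborhood
containing the empty node the scan came from; its clockwise-last empty direction is
`d + j - 1`, where `j` is the first offset with `w + vec6 (d + j)` occupied. -/
def SuccRel (A : Set (ℤ × ℤ)) (a b : Agent A) : Prop :=
  ∃ j : ℕ, (∀ i : ℕ, i < j → a.1.1 + vec6 (a.1.2 + 1) + vec6 (a.1.2 + (i : ZMod 6)) ∉ A) ∧
    a.1.1 + vec6 (a.1.2 + 1) + vec6 (a.1.2 + (j : ZMod 6)) ∈ A ∧
    b.1.1 = a.1.1 + vec6 (a.1.2 + 1) ∧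
    b.1.2 = a.1.2 + (j : ZMod 6) - 1

/-- `PredRel A a b` holds iff `b` is the predecessor of agent `a`: scanning the neighbors of
`a`'s node counter-clockwise starting from its empty region, the directions
`d, d - 1, ..., d - m` are all empty and `v + vec6 (d - m - 1)` is the first occupied node;
`b` is the corresponding agent of that node, with direction `d - m + 1`. -/
def PredRel (A : Set (ℤ × ℤ)) (a b : Agent A) : Prop :=
  ∃ m : ℕ, (∀ i : ℕ, i ≤ m → a.1.1 + vec6 (a.1.2 - (i : ZMod 6)) ∉ A) ∧
    a.1.1 + vec6 (a.1.2 - (m : ZMod 6) - 1) ∈ A ∧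
    b.1.1 = a.1.1 + vec6 (a.1.2 - (m : ZMod 6) - 1) ∧
    b.1.2 = a.1.2 - (m : ZMod 6) + 1

private lemma vec6_three : ∀ x : ZMod 6, vec6 (x + 3) = -vec6 x := by decide

private lemma vec6_mid : ∀ x : ZMod 6, vec6 (x + 1) + vec6 (x - 1) = vec6 x := by decide

private lemma zmod6_L1 : ∀ x c : ZMod 6, x + c - 1 - c - 1 = x + 1 + 3 := by decide

private lemma val_cast (x : ZMod 6) : ((x.val : ℕ) : ZMod 6) = x := by
  simp [ZMod.natCast_val, ZMod.cast_id]

private lemma geqt_adj {v w : ℤ × ℤ} (h : Geqt.Adj v w) : ∃ e : ZMod 6, w = v + vec6 e := by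
  rw [Geqt, SimpleGraph.fromRel_adj] at h
  obtain ⟨-, h | h⟩ := h <;>
      simp only [Set.mem_insert_iff, Set.mem_singleton_iff] at h <;>
      rcases h with h | h | h
  · exact ⟨0, by rw [show vec6 0 = ((1 : ℤ), (0 : ℤ)) from by decide, ← h]; abel⟩
  · exact ⟨2, by rw [show vec6 2 = ((0 : ℤ), (1 : ℤ)) from by decide, ← h]; abel⟩
  · exact ⟨1, by rw [show vec6 1 = ((1 : ℤ), (1 : ℤ)) from by decide, ← h]; abel⟩
  · exact ⟨3, by rw [show vec6 3 = -((1 : ℤ), (0 : ℤ)) from by decide, ← h]; abel⟩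
  · exact ⟨5, by rw [show vec6 5 = -((0 : ℤ), (1 : ℤ)) from by decide, ← h]; abel⟩
  · exact ⟨4, by rw [show vec6 4 = -((1 : ℤ), (1 : ℤ)) from by decide, ← h]; abel⟩

private lemma exists_nbr {A : Set (ℤ × ℤ)} (hconn : (Geqt.induce A).Connected)
    (hcard : 2 ≤ A.ncard) : ∀ v ∈ A, ∃ e : ZMod 6, v + vec6 e ∈ A := by
  intro v hv
  obtain ⟨u, hu, hne⟩ := Set.exists_ne_of_one_lt_ncard (s := A) (by omega) v
  obtain ⟨p⟩ := hconn.preconnected ⟨v, hv⟩ ⟨u, hu⟩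
  have hne' : (⟨v, hv⟩ : A) ≠ ⟨u, hu⟩ := by
    simp only [ne_eq, Subtype.mk.injEq]
    exact fun h => hne h.symm
  have hadj := p.adj_snd (SimpleGraph.Walk.not_nil_of_ne hne')
  have hadj' : Geqt.Adj v (p.getVert 1).1 := hadj
  obtain ⟨e, he⟩ := geqt_adj hadj'
  exact ⟨e, by rw [← he]; exact (p.getVert 1).2⟩

private lemma succ_exists {A : Set (ℤ × ℤ)}
    (hnbr : ∀ v ∈ A, ∃ e : ZMod 6, v + vec6 e ∈ A) (a : Agent A) :
    ∃ b : Agent A, SuccRel A a b := by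
  classical
  obtain ⟨⟨v, d⟩, hv, hd, hd1⟩ := a
  obtain ⟨e, he⟩ := hnbr (v + vec6 (d + 1)) hd1
  have hP : ∃ j : ℕ, v + vec6 (d + 1) + vec6 (d + (j : ZMod 6)) ∈ A :=
    ⟨(e - d).val, by rw [val_cast, show d + (e - d) = e from by ring]; exact he⟩
  obtain ⟨j, hspec, hmin⟩ : ∃ j : ℕ, (v + vec6 (d + 1) + vec6 (d + (j : ZMod 6)) ∈ A) ∧
      ∀ i : ℕ, i < j → v + vec6 (d + 1) + vec6 (d + (i : ZMod 6)) ∉ A :=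
    ⟨Nat.find hP, Nat.find_spec hP, fun i hi => Nat.find_min hP hi⟩
  have hnot : v + vec6 (d + 1) + vec6 (d + (j : ZMod 6) - 1) ∉ A := by
    cases j with
    | zero =>
      have heq : v + vec6 (d + 1) + vec6 (d + ((0 : ℕ) : ZMod 6) - 1) = v + vec6 d := by
        rw [show d + ((0 : ℕ) : ZMod 6) - 1 = d - 1 from by push_cast; ring, add_assoc,
          vec6_mid]
      rw [heq]; exact hd
    | succ k =>
      have heq : d + ((k + 1 : ℕ) : ZMod 6) - 1 = d + (k : ZMod 6) := by push_cast; ring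
      rw [heq]; exact hmin k (Nat.lt_succ_self k)
  have hin : v + vec6 (d + 1) + vec6 (d + (j : ZMod 6) - 1 + 1) ∈ A := by
    rw [show d + (j : ZMod 6) - 1 + 1 = d + (j : ZMod 6) from by ring]; exact hspec
  exact ⟨⟨(v + vec6 (d + 1), d + (j : ZMod 6) - 1), hd1, hnot, hin⟩,
    j, hmin, hspec, rfl, rfl⟩

private lemma succ_unique {A : Set (ℤ × ℤ)} {a b c : Agent A}
    (hb : SuccRel A a b) (hc : SuccRel A a c) : b = c := by
  obtain ⟨j₁, h1, h2, h3, h4⟩ := hb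
  obtain ⟨j₂, g1, g2, g3, g4⟩ := hc
  have hj : j₁ = j₂ := by
    rcases lt_trichotomy j₁ j₂ with h | h | h
    · exact absurd h2 (g1 j₁ h)
    · exact h
    · exact absurd g2 (h1 j₂ h)
  apply Subtype.ext
  apply Prod.ext
  · rw [h3, g3]
  · rw [h4, g4, hj]

private lemma pred_exists {A : Set (ℤ × ℤ)}
    (hnbr : ∀ v ∈ A, ∃ e : ZMod 6, v + vec6 e ∈ A) (a : Agent A) :
    ∃ b : Agent A, PredRel A a b := by
  classical
  obtain ⟨⟨v, d⟩, hv, hd, hd1⟩ := a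
  obtain ⟨e, he⟩ := hnbr v hv
  have hQ : ∃ m : ℕ, v + vec6 (d - (m : ZMod 6) - 1) ∈ A :=
    ⟨(d - 1 - e).val, by rw [val_cast, show d - (d - 1 - e) - 1 = e from by ring]; exact he⟩
  obtain ⟨m, hspec, hmin⟩ : ∃ m : ℕ, (v + vec6 (d - (m : ZMod 6) - 1) ∈ A) ∧
      ∀ i : ℕ, i < m → v + vec6 (d - (i : ZMod 6) - 1) ∉ A :=
    ⟨Nat.find hQ, Nat.find_spec hQ, fun i hi => Nat.find_min hQ hi⟩
  have hcond : ∀ i : ℕ, i ≤ m → v + vec6 (d - (i : ZMod 6)) ∉ A := by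
    intro i hi
    cases i with
    | zero => rw [show d - ((0 : ℕ) : ZMod 6) = d from by push_cast; ring]; exact hd
    | succ k =>
      rw [show d - ((k + 1 : ℕ) : ZMod 6) = d - (k : ZMod 6) - 1 from by push_cast; ring]
      exact hmin k (by omega)
  have hb2 : v + vec6 (d - (m : ZMod 6) - 1) + vec6 (d - (m : ZMod 6) + 1) ∉ A := by
    have heq : v + vec6 (d - (m : ZMod 6) - 1) + vec6 (d - (m : ZMod 6) + 1) =
        v + vec6 (d - (m : ZMod 6)) := by
      rw [add_assoc, add_comm (vec6 (d - (m : ZMod 6) - 1)), vec6_mid]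
    rw [heq]; exact hcond m le_rfl
  have hb3 : v + vec6 (d - (m : ZMod 6) - 1) + vec6 (d - (m : ZMod 6) + 1 + 1) ∈ A := by
    rw [show d - (m : ZMod 6) + 1 + 1 = d - (m : ZMod 6) - 1 + 3 from by ring, vec6_three]
    have heq : v + vec6 (d - (m : ZMod 6) - 1) + -vec6 (d - (m : ZMod 6) - 1) = v := by abel
    rw [heq]; exact hv
  exact ⟨⟨(v + vec6 (d - (m : ZMod 6) - 1), d - (m : ZMod 6) + 1), hspec, hb2, hb3⟩,
    m, hcond, hspec, rfl, rfl⟩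

private lemma pred_unique {A : Set (ℤ × ℤ)} {a b c : Agent A}
    (hb : PredRel A a b) (hc : PredRel A a c) : b = c := by
  obtain ⟨m₁, h1, h2, h3, h4⟩ := hb
  obtain ⟨m₂, g1, g2, g3, g4⟩ := hc
  have key : ∀ n₁ n₂ : ℕ, (∀ i : ℕ, i ≤ n₂ → a.1.1 + vec6 (a.1.2 - (i : ZMod 6)) ∉ A) →
      a.1.1 + vec6 (a.1.2 - (n₁ : ZMod 6) - 1) ∈ A → n₁ < n₂ → False := by
    intro n₁ n₂ hg hh hlt
    refine hg (n₁ + 1) (by omega) ?_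
    rw [show a.1.2 - ((n₁ + 1 : ℕ) : ZMod 6) = a.1.2 - (n₁ : ZMod 6) - 1 from by
      push_cast; ring]
    exact hh
  have hm : m₁ = m₂ := by
    rcases lt_trichotomy m₁ m₂ with h | h | h
    · exact absurd (key m₁ m₂ g1 h2 h) not_false
    · exact h
    · exact absurd (key m₂ m₁ h1 g2 h) not_false
  apply Subtype.ext
  apply Prod.ext
  · rw [h3, g3, hm]
  · rw [h4, g4, hm]

private lemma succ_iff_pred {A : Set (ℤ × ℤ)} {a b : Agent A} :
    SuccRel A a b ↔ PredRel A b a := by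
  obtain ⟨⟨v, d⟩, hv, hd, hd1⟩ := a
  obtain ⟨⟨u, e⟩, hu, he, he1⟩ := b
  constructor
  · rintro ⟨j, h1, h2, h3, h4⟩
    dsimp only at h1 h2 h3 h4
    have heq : u + vec6 (e - (j : ZMod 6) - 1) = v := by
      rw [h3, h4, zmod6_L1 d ((j : ZMod 6)), vec6_three]
      abel
    refine ⟨j, ?_, ?_, ?_, ?_⟩
    · intro i hij
      show u + vec6 (e - (i : ZMod 6)) ∉ A
      rcases eq_or_lt_of_le hij with rfl | hlt
      · have heq2 : u + vec6 (e - (i : ZMod 6)) = v + vec6 d := by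
          rw [h3, h4, show d + (i : ZMod 6) - 1 - (i : ZMod 6) = d - 1 from by ring,
            add_assoc, vec6_mid]
        rw [heq2]; exact hd
      · have heq2 : e - (i : ZMod 6) = d + ((j - 1 - i : ℕ) : ZMod 6) := by
          rw [h4, Nat.cast_sub (by omega : i ≤ j - 1), Nat.cast_sub (by omega : 1 ≤ j)]
          ring
        rw [heq2, h3]
        exact h1 (j - 1 - i) (by omega)
    · show u + vec6 (e - (j : ZMod 6) - 1) ∈ A
      rw [heq]; exact hv
    · show v = u + vec6 (e - (j : ZMod 6) - 1)
      exact heq.symm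
    · show d = e - (j : ZMod 6) + 1
      rw [h4]; ring
  · rintro ⟨m, g1, g2, g3, g4⟩
    dsimp only at g1 g2 g3 g4
    have huv : v + vec6 (d + 1) = u := by
      rw [g3, g4, show e - (m : ZMod 6) + 1 + 1 = e - (m : ZMod 6) - 1 + 3 from by ring,
        vec6_three]
      abel
    refine ⟨m, ?_, ?_, ?_, ?_⟩
    · intro i hlt
      show v + vec6 (d + 1) + vec6 (d + (i : ZMod 6)) ∉ A
      have heq : d + (i : ZMod 6) = e - ((m - 1 - i : ℕ) : ZMod 6) := by
        rw [g4, Nat.cast_sub (by omega : i ≤ m - 1), Nat.cast_sub (by omega : 1 ≤ m)]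
        ring
      rw [huv, heq]
      exact g1 (m - 1 - i) (by omega)
    · show v + vec6 (d + 1) + vec6 (d + (m : ZMod 6)) ∈ A
      rw [huv, show d + (m : ZMod 6) = e + 1 from by rw [g4]; ring]
      exact he1
    · show u = v + vec6 (d + 1)
      exact huv.symm
    · show e = d + (m : ZMod 6) - 1
      rw [g4]; ring

/-- For a finite connected particle structure `A` with at least two particles, the
clockwise successor scan and the counter-clockwise predecessor scan define functions on the
set of agents (each agent has a unique successor and a unique predecessor), and these are
mutually inverse; hence `succ` is a permutation of the agents and the agents decompose
into disjoint cycles (the boundary cycles). -/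
theorem boundary_cycles_well_defined (A : Set (ℤ × ℤ)) (hfin : A.Finite)
    (hconn : (Geqt.induce A).Connected) (hcard : 2 ≤ A.ncard) :
    (∀ a : Agent A, ∃! b, SuccRel A a b) ∧
    (∀ a : Agent A, ∃! b, PredRel A a b) ∧
    (∀ a b : Agent A, SuccRel A a b ↔ PredRel A b a) := by
  have hnbr := exists_nbr hconn hcard
  refine ⟨fun a => ?_, fun a => ?_, fun a b => succ_iff_pred⟩
  · obtain ⟨b, hb⟩ := succ_exists hnbr a
    exact ⟨b, hb, fun y hy => succ_unique hy hb⟩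
  · obtain ⟨b, hb⟩ := pred_exists hnbr a
    exact ⟨b, hb, fun y hy => pred_unique hy hb⟩
end
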